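/- Let d ≥ 2, r > 0, a ∈ ℝ^d, and let Λ : ℝ^d → ℝ^d be a bijective linear map with η(Λp, Λq) = η(p, q) for all p, q and with (Λp)⁰ > 0 whenever η(p, p) < 0 and p⁰ > 0. Then for all measurable φ, ψ : ℝ^d → ℂ, ∫ conj( e^{−i η(p,a)} φ(Λ⁻¹ p) ) · e^{−i η(p,a)} ψ(Λ⁻¹ p) dμ_r^+(p) = ∫ conj(φ(p)) ψ(p) dμ_r^+(p); in particular the map ψ ↦ ( p ↦ e^{−i η(p,a)} ψ(Λ⁻¹ p) ) preserves the L²(μ_r^+) inner product. -/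

import Mathlib

open MeasureTheory

noncomputable section

/-- Minkowski inner product on `ℝ^{m+1}`: `η(p,q) = -p⁰q⁰ + Σ_{j=1}^{m} pʲqʲ`. -/
def eta {m : ℕ} (p q : EuclideanSpace ℝ (Fin (m + 1))) : ℝ :=
  -(p 0 * q 0) + ∑ j : Fin m, p j.succ * q j.succ

/-- `ω_r(p⃗) = √(|p⃗|² + r)`. -/
def omg {m : ℕ} (r : ℝ) (v : EuclideanSpace ℝ (Fin m)) : ℝ :=
  Real.sqrt (‖v‖ ^ 2 + r)

/-- Embedding of `ℝ^m` onto the forward mass shell: `p⃗ ↦ (ω_r(p⃗), p⃗)`. -/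
def embed {m : ℕ} (r : ℝ) (v : EuclideanSpace ℝ (Fin m)) :
    EuclideanSpace ℝ (Fin (m + 1)) :=
  WithLp.toLp 2 (Fin.cons (omg r v) v.ofLp : Fin (m + 1) → ℝ)

/-- The forward mass-shell measure `μ_r^+`. -/
def massShellMeasure (m : ℕ) (r : ℝ) : Measure (EuclideanSpace ℝ (Fin (m + 1))) :=
  Measure.map (embed r)
    (volume.withDensity fun v => ENNReal.ofReal ((2 * omg r v)⁻¹))

namespace MassShellAux

open scoped RealInnerProductSpace ENNReal

abbrev Em (m : ℕ) := EuclideanSpace ℝ (Fin m)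

/-- The spatial part of a vector. -/
def tl {m : ℕ} (p : Em (m + 1)) : Em m := WithLp.toLp 2 (fun j => p j.succ)

lemma tl_apply {m : ℕ} (p : Em (m + 1)) (j : Fin m) : tl p j = p j.succ := rfl

lemma normsq_eq {m : ℕ} (v : Em m) : ‖v‖ ^ 2 = ∑ i, v i * v i := by
  rw [EuclideanSpace.norm_eq, Real.sq_sqrt (by positivity)]
  simp [Real.norm_eq_abs, sq_abs, sq]

lemma omg_pos {m : ℕ} {r : ℝ} (hr : 0 < r) (v : Em m) : 0 < omg r v := by
  apply Real.sqrt_pos.2; positivity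

lemma omg_sq {m : ℕ} {r : ℝ} (hr : 0 < r) (v : Em m) : omg r v ^ 2 = ‖v‖ ^ 2 + r := by
  rw [omg, Real.sq_sqrt]; positivity

lemma embed_apply_zero {m : ℕ} (r : ℝ) (v : Em m) : embed r v 0 = omg r v := rfl

lemma embed_apply_succ {m : ℕ} (r : ℝ) (v : Em m) (j : Fin m) : embed r v j.succ = v j := by
  simp [embed]

lemma tl_embed {m : ℕ} (r : ℝ) (v : Em m) : tl (embed r v) = v := by
  ext j; simp [tl_apply, embed_apply_succ]

lemma eta_embed {m : ℕ} {r : ℝ} (hr : 0 < r) (v : Em m) :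
    eta (embed r v) (embed r v) = -r := by
  simp only [eta, embed_apply_zero, embed_apply_succ]
  have h := omg_sq hr v
  have h2 := normsq_eq v
  nlinarith [h, h2]

lemma embed_of_shell {m : ℕ} {r : ℝ} (hr : 0 < r) (p : Em (m + 1))
    (h : eta p p = -r) (hp : 0 < p 0) : embed r (tl p) = p := by
  ext i
  induction i using Fin.cases with
  | zero =>
    rw [embed_apply_zero, omg]
    have hn : ‖tl p‖ ^ 2 = ∑ j : Fin m, p j.succ * p j.succ := by
      rw [normsq_eq]; rfl
    have h2 : ‖tl p‖ ^ 2 + r = p 0 * p 0 := by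
      rw [eta] at h; linarith
    rw [h2, ← sq, Real.sqrt_sq hp.le]
  | succ j => rw [embed_apply_succ, tl_apply]

/-- A vector with negative Minkowski square has nonzero time component. -/
lemma time_ne_zero {m : ℕ} (p : Em (m + 1)) (h : eta p p < 0) : p 0 ≠ 0 := by
  intro h0
  rw [eta, h0] at h
  have : (0:ℝ) ≤ ∑ j : Fin m, p j.succ * p j.succ :=
    Finset.sum_nonneg fun j _ => mul_self_nonneg _
  nlinarith

lemma eta_neg {m : ℕ} (p : Em (m + 1)) : eta (-p) (-p) = eta p p := by
  simp [eta]

lemma neg_apply' {m : ℕ} (p : Em (m + 1)) (i : Fin (m + 1)) : (-p) i = -(p i) := rfl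

lemma symm_orth {m : ℕ} (Λ : Em (m + 1) ≃ₗ[ℝ] Em (m + 1))
    (hη : ∀ p q, eta (Λ p) (Λ q) = eta p q)
    (horth : ∀ p, eta p p < 0 → 0 < p 0 → 0 < (Λ p) 0) :
    ∀ p, eta p p < 0 → 0 < p 0 → 0 < (Λ.symm p) 0 := by
  intro p hp hp0
  set u := Λ.symm p with hu_def
  have hu : Λ u = p := Λ.apply_symm_apply p
  have huu : eta u u < 0 := by rw [← hη u u, hu]; exact hp
  rcases (time_ne_zero u huu).lt_or_gt with hneg | hpos
  · exfalso
    have hw : eta (-u) (-u) < 0 := by rw [eta_neg]; exact huu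
    have hw0 : 0 < (-u) 0 := by rw [neg_apply']; linarith
    have := horth (-u) hw hw0
    rw [map_neg, hu, neg_apply'] at this
    linarith
  · exact hpos

lemma eta_eq_sum {m : ℕ} (x y : Em (m + 1)) :
    eta x y = ∑ k, (if k = 0 then (-1 : ℝ) else 1) * (x k * y k) := by
  rw [eta, Fin.sum_univ_succ]
  simp [Fin.succ_ne_zero]

lemma abs_det_eq_one {m : ℕ} (Λ : Em (m + 1) ≃ₗ[ℝ] Em (m + 1))
    (hη : ∀ p q, eta (Λ p) (Λ q) = eta p q) :
    |LinearMap.det (Λ : Em (m + 1) →ₗ[ℝ] Em (m + 1))| = 1 := by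
  classical
  set b := (EuclideanSpace.basisFun (Fin (m + 1)) ℝ).toBasis with hb
  set N := LinearMap.toMatrix b b (Λ : Em (m + 1) →ₗ[ℝ] Em (m + 1)) with hN_def
  set g : Fin (m + 1) → ℝ := fun k => if k = 0 then -1 else 1 with hg
  have hN : ∀ k j, N k j = (Λ (EuclideanSpace.single j 1)) k := by
    intro k j
    rw [hN_def, LinearMap.toMatrix_apply, hb]
    rw [OrthonormalBasis.coe_toBasis_repr_apply, OrthonormalBasis.coe_toBasis,
      EuclideanSpace.basisFun_apply, EuclideanSpace.basisFun_repr]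
    rfl
  have hmat : N.transpose * Matrix.diagonal g * N = Matrix.diagonal g := by
    ext i j
    have hthis := hη (EuclideanSpace.single i 1) (EuclideanSpace.single j 1)
    rw [eta_eq_sum, eta_eq_sum] at hthis
    have hl : (N.transpose * Matrix.diagonal g * N) i j
        = ∑ k, g k * ((Λ (EuclideanSpace.single i 1)) k * (Λ (EuclideanSpace.single j 1)) k) := by
      rw [Matrix.mul_apply]
      congr 1; funext k
      rw [Matrix.mul_diagonal, Matrix.transpose_apply, hN, hN]
      ring
    rw [hl, hthis]
    rcases eq_or_ne i j with h | h
    · subst h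
      simp [EuclideanSpace.single_apply, Matrix.diagonal_apply_eq, hg, mul_ite, ite_mul]
    · rw [Matrix.diagonal_apply_ne _ h, Finset.sum_eq_zero]
      intro k _
      rcases eq_or_ne k i with hk | hk
      · subst hk; simp [EuclideanSpace.single_apply, h]
      · simp [EuclideanSpace.single_apply, hk]
  have hdet := congrArg Matrix.det hmat
  rw [Matrix.det_mul, Matrix.det_mul, Matrix.det_transpose, Matrix.det_diagonal] at hdet
  have hgne : (∏ i, g i) ≠ 0 := by
    apply Finset.prod_ne_zero_iff.2
    intro i _
    by_cases h : i = 0 <;> norm_num [hg, h]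
  have h2 : N.det * N.det = 1 := by
    have h' : (N.det * N.det) * (∏ i, g i) = 1 * (∏ i, g i) := by
      rw [one_mul]; linear_combination hdet
    exact mul_right_cancel₀ hgne h' 
  have := mul_self_eq_one_iff.mp h2
  have hd : LinearMap.det (Λ : Em (m + 1) →ₗ[ℝ] Em (m + 1)) = N.det := by
    rw [hN_def, LinearMap.det_toMatrix]
  rw [hd]
  rcases this with h | h <;> rw [h] <;> norm_num

/-! ### Continuous linear maps -/

def tlCLM (m : ℕ) : Em (m + 1) →L[ℝ] Em m :=
  LinearMap.toContinuousLinearMap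
    { toFun := tl
      map_add' := fun _ _ => rfl
      map_smul' := fun _ _ => rfl }

lemma tlCLM_apply {m : ℕ} (q : Em (m + 1)) : tlCLM m q = tl q := rfl

def fstCLM (m : ℕ) : Em (m + 1) →L[ℝ] ℝ :=
  LinearMap.toContinuousLinearMap
    { toFun := fun q => q 0
      map_add' := fun _ _ => rfl
      map_smul' := fun _ _ => rfl }

lemma fstCLM_apply {m : ℕ} (q : Em (m + 1)) : fstCLM m q = q 0 := rfl

def JCLM (m : ℕ) : Em m →L[ℝ] Em (m + 1) :=
  LinearMap.toContinuousLinearMap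
    { toFun := fun v => WithLp.toLp 2 (Fin.cons 0 v.ofLp)
      map_add' := by
        intro x y; ext i
        induction i using Fin.cases with
        | zero => simp [PiLp.add_apply]
        | succ j => simp [PiLp.add_apply]
      map_smul' := by
        intro c x; ext i
        induction i using Fin.cases with
        | zero => simp [PiLp.smul_apply]
        | succ j => simp [PiLp.smul_apply] }

lemma JCLM_apply {m : ℕ} (v : Em m) : JCLM m v = WithLp.toLp 2 (Fin.cons 0 v.ofLp) := rfl

def c0 (m : ℕ) : Em (m + 1) := EuclideanSpace.single 0 1

/-! ### Derivatives -/

lemma hasFDerivAt_omg {m : ℕ} {r : ℝ} (hr : 0 < r) (v : Em m) :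
    HasFDerivAt (omg r) ((omg r v)⁻¹ • innerSL ℝ v) v := by
  have hpos : 0 < ‖v‖ ^ 2 + r := by positivity
  have hfun : (fun w : Em m => Real.sqrt (⟪w, w⟫ + r)) = omg r := by
    funext w; rw [real_inner_self_eq_norm_sq]; rfl
  have h1 : HasFDerivAt (fun w : Em m => ⟪w, w⟫ + r)
      ((fderivInnerCLM ℝ (v, v)).comp ((ContinuousLinearMap.id ℝ (Em m)).prod
        (ContinuousLinearMap.id ℝ (Em m)))) v :=
    ((hasFDerivAt_id v).inner ℝ (hasFDerivAt_id v)).add_const r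
  have hne : (fun w : Em m => ⟪w, w⟫ + r) v ≠ 0 := by
    simp only [real_inner_self_eq_norm_sq]; positivity
  have h2 := (Real.hasDerivAt_sqrt hne).comp_hasFDerivAt v h1
  simp only [Function.comp_def] at h2
  rw [hfun] at h2
  refine h2.congr_fderiv ?_
  ext w
  have homg : omg r v = Real.sqrt (‖v‖ ^ 2 + r) := rfl
  have hsq : Real.sqrt (‖v‖ ^ 2 + r) ≠ 0 := by positivity
  simp only [ContinuousLinearMap.smul_apply, innerSL_apply_apply, ContinuousLinearMap.comp_apply,
    ContinuousLinearMap.prod_apply, ContinuousLinearMap.coe_id', id_eq, fderivInnerCLM_apply,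
    smul_eq_mul, real_inner_self_eq_norm_sq, homg]
  rw [real_inner_comm w v]
  field_simp
  ring

def embedD {m : ℕ} (r : ℝ) (v : Em m) : Em m →L[ℝ] Em (m + 1) :=
  (((omg r v)⁻¹ • innerSL ℝ v).smulRight (c0 m)) + JCLM m

lemma embed_eq {m : ℕ} (r : ℝ) :
    embed (m := m) r = fun v => omg r v • c0 m + JCLM m v := by
  funext v; ext i
  induction i using Fin.cases with
  | zero =>
    simp [embed, c0, JCLM_apply, PiLp.add_apply, PiLp.smul_apply,
      EuclideanSpace.single_apply]
  | succ j =>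
    simp [embed, c0, JCLM_apply, PiLp.add_apply, PiLp.smul_apply,
      EuclideanSpace.single_apply, Fin.succ_ne_zero]

lemma hasFDerivAt_embed {m : ℕ} {r : ℝ} (hr : 0 < r) (v : Em m) :
    HasFDerivAt (embed r) (embedD r v) v := by
  rw [embed_eq]
  exact ((hasFDerivAt_omg hr v).smul_const (c0 m)).add ((JCLM m).hasFDerivAt)

def Psi {m : ℕ} (r : ℝ) (q : Em (m + 1)) : Em (m + 1) := q 0 • embed r (tl q)

def Lmap {m : ℕ} (r : ℝ) (q : Em (m + 1)) : Em (m + 1) →L[ℝ] Em (m + 1) :=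
  q 0 • ((embedD r (tl q)).comp (tlCLM m)) + (fstCLM m).smulRight (embed r (tl q))

lemma hasFDerivAt_Psi {m : ℕ} {r : ℝ} (hr : 0 < r) (q : Em (m + 1)) :
    HasFDerivAt (Psi r) (Lmap r q) q := by
  have h1 : HasFDerivAt (fun q : Em (m + 1) => q 0) (fstCLM m) q :=
    (fstCLM m).hasFDerivAt
  have h2 : HasFDerivAt (fun q : Em (m + 1) => embed r (tl q))
      ((embedD r (tl q)).comp (tlCLM m)) q :=
    (hasFDerivAt_embed hr (tl q)).comp q ((tlCLM m).hasFDerivAt)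
  exact h1.smul h2

/-! ### Determinant of the derivative -/

lemma toMatrix_entry {n : ℕ} (f : Em n →ₗ[ℝ] Em n) (i j : Fin n) :
    LinearMap.toMatrix (EuclideanSpace.basisFun (Fin n) ℝ).toBasis
      (EuclideanSpace.basisFun (Fin n) ℝ).toBasis f i j
      = f (EuclideanSpace.single j 1) i := by
  rw [LinearMap.toMatrix_apply, OrthonormalBasis.coe_toBasis_repr_apply,
    OrthonormalBasis.coe_toBasis, EuclideanSpace.basisFun_apply,
    EuclideanSpace.basisFun_repr]

def sumEquiv (m : ℕ) : Fin 1 ⊕ Fin m ≃ Fin (m + 1) where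
  toFun := Sum.elim (fun _ => 0) Fin.succ
  invFun := Fin.cases (Sum.inl 0) Sum.inr
  left_inv := by
    rintro (x | j)
    · rw [Fin.fin_one_eq_zero x]; rfl
    · simp
  right_inv := by
    intro i
    induction i using Fin.cases with
    | zero => rfl
    | succ j => simp

lemma sumEquiv_symm_zero (m : ℕ) : (sumEquiv m).symm 0 = Sum.inl 0 := rfl

lemma sumEquiv_symm_succ {m : ℕ} (j : Fin m) : (sumEquiv m).symm j.succ = Sum.inr j := by
  have : (sumEquiv m) (Sum.inr j) = j.succ := rfl
  rw [← this, Equiv.symm_apply_apply]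

lemma tl_single_zero {m : ℕ} : tl (EuclideanSpace.single (0 : Fin (m + 1)) (1 : ℝ)) = 0 := by
  ext j
  simp [tl_apply, EuclideanSpace.single_apply, Fin.succ_ne_zero]

lemma tl_single_succ {m : ℕ} (j : Fin m) :
    tl (EuclideanSpace.single j.succ (1 : ℝ)) = EuclideanSpace.single j 1 := by
  ext k
  simp [tl_apply, EuclideanSpace.single_apply, Fin.succ_inj]

lemma Lmap_apply_zero {m : ℕ} (r : ℝ) (q w : Em (m + 1)) :
    (Lmap r q w) 0
      = q 0 * ((omg r (tl q))⁻¹ * ⟪tl q, tl w⟫) + w 0 * omg r (tl q) := by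
  simp [Lmap, embedD, ContinuousLinearMap.add_apply, ContinuousLinearMap.smul_apply,
    ContinuousLinearMap.comp_apply, ContinuousLinearMap.smulRight_apply,
    tlCLM_apply, fstCLM_apply, JCLM_apply, c0, PiLp.add_apply, PiLp.smul_apply,
    EuclideanSpace.single_apply, embed_apply_zero, smul_eq_mul]

lemma Lmap_apply_succ {m : ℕ} (r : ℝ) (q w : Em (m + 1)) (k : Fin m) :
    (Lmap r q w) k.succ = q 0 * tl w k + w 0 * tl q k := by
  simp [Lmap, embedD, ContinuousLinearMap.add_apply, ContinuousLinearMap.smul_apply,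
    ContinuousLinearMap.comp_apply, ContinuousLinearMap.smulRight_apply,
    tlCLM_apply, fstCLM_apply, JCLM_apply, c0, PiLp.add_apply, PiLp.smul_apply,
    EuclideanSpace.single_apply, embed_apply_succ, smul_eq_mul, Fin.succ_ne_zero,
    tl_apply]

lemma det_Lmap {m : ℕ} {r : ℝ} (hr : 0 < r) (q : Em (m + 1)) :
    (Lmap r q).det = (q 0) ^ m * (r / omg r (tl q)) := by
  classical
  set v := tl q with hv
  set t := q 0 with ht
  set ω := omg r v with hω
  have hω0 : 0 < ω := omg_pos hr v
  set A : Matrix (Fin 1 ⊕ Fin m) (Fin 1 ⊕ Fin m) ℝ :=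
    Matrix.fromBlocks (Matrix.diagonal fun _ : Fin 1 => ω)
      (Matrix.of fun _ j => t * (ω⁻¹ * v j))
      (Matrix.of fun i _ => v i)
      (t • (1 : Matrix (Fin m) (Fin m) ℝ)) with hA
  have hM : LinearMap.toMatrix (EuclideanSpace.basisFun (Fin (m + 1)) ℝ).toBasis
      (EuclideanSpace.basisFun (Fin (m + 1)) ℝ).toBasis
      ((Lmap r q : Em (m + 1) →ₗ[ℝ] Em (m + 1)))
      = A.submatrix (sumEquiv m).symm (sumEquiv m).symm := by
    ext i j
    rw [toMatrix_entry, Matrix.submatrix_apply, ContinuousLinearMap.coe_coe]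
    induction i using Fin.cases with
    | zero =>
      induction j using Fin.cases with
      | zero =>
        rw [Lmap_apply_zero, sumEquiv_symm_zero, hA]
        simp [tl_single_zero, EuclideanSpace.single_apply, ← hv, ← hω]
      | succ k =>
        rw [Lmap_apply_zero, sumEquiv_symm_zero, sumEquiv_symm_succ, hA]
        simp [tl_single_succ, EuclideanSpace.single_apply, Fin.succ_ne_zero,
          EuclideanSpace.inner_single_right, ← hv, ← hω, ← ht]
    | succ l =>
      induction j using Fin.cases with
      | zero =>
        rw [Lmap_apply_succ, sumEquiv_symm_zero, sumEquiv_symm_succ, hA]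
        simp [tl_single_zero, EuclideanSpace.single_apply, ← hv, ← ht]
      | succ k =>
        rw [Lmap_apply_succ, sumEquiv_symm_succ, sumEquiv_symm_succ, hA]
        simp [tl_single_succ, EuclideanSpace.single_apply, Fin.succ_ne_zero,
          Matrix.one_apply, ← hv, ← ht]
  have hdet1 : (Lmap r q).det = A.det := by
    rw [ContinuousLinearMap.det,
      ← LinearMap.det_toMatrix (EuclideanSpace.basisFun (Fin (m + 1)) ℝ).toBasis, hM,
      Matrix.det_submatrix_equiv_self]
  rw [hdet1]
  letI iA : Invertible (Matrix.diagonal fun _ : Fin 1 => ω) :=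
    ⟨Matrix.diagonal fun _ => ω⁻¹,
      by rw [Matrix.diagonal_mul_diagonal]; simp [inv_mul_cancel₀ hω0.ne'],
      by rw [Matrix.diagonal_mul_diagonal]; simp [mul_inv_cancel₀ hω0.ne']⟩
  rw [hA, Matrix.det_fromBlocks₁₁]
  have hinv : (⅟(Matrix.diagonal fun _ : Fin 1 => ω)) = Matrix.diagonal fun _ => ω⁻¹ := rfl
  set u : Fin m → ℝ := fun i => -(ω⁻¹ * ω⁻¹ * v i) with hu
  have hsub : t • (1 : Matrix (Fin m) (Fin m) ℝ)
      - (Matrix.of fun (i : Fin m) (_ : Fin 1) => v i) * (⅟(Matrix.diagonal fun _ : Fin 1 => ω))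
        * (Matrix.of fun (_ : Fin 1) (j : Fin m) => t * (ω⁻¹ * v j))
      = t • ((1 : Matrix (Fin m) (Fin m) ℝ) + Matrix.replicateCol (Fin 1) u * Matrix.replicateRow (Fin 1) v) := by
    rw [hinv]
    ext k j
    simp only [Matrix.sub_apply, Matrix.smul_apply, smul_eq_mul, Matrix.add_apply,
      Matrix.mul_apply, Fin.sum_univ_one, Matrix.of_apply, Matrix.replicateCol_apply,
      Matrix.replicateRow_apply, Matrix.diagonal_apply_eq, hu]
    ring
  rw [hsub, Matrix.det_smul]
  erw [Matrix.det_one_add_replicateCol_mul_replicateRow]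
  have hdot : dotProduct v.ofLp u = -(ω⁻¹ * ω⁻¹ * ‖v‖ ^ 2) := by
    rw [normsq_eq]
    simp only [dotProduct, hu]
    rw [Finset.mul_sum, ← Finset.sum_neg_distrib]
    exact Finset.sum_congr rfl fun k _ => by ring
  rw [hdot]
  have hsq : ω ^ 2 = ‖v‖ ^ 2 + r := omg_sq hr v
  have hd : Matrix.det (Matrix.diagonal fun _ : Fin 1 => ω) = ω := by
    simp [Matrix.det_diagonal]
  rw [hd]
  simp only [Fintype.card_fin]
  have hnv : ‖v‖ ^ 2 = ω ^ 2 - r := by linarith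
  rw [hnv]
  field_simp
  ring

/-! ### Injectivity of `Psi` -/

lemma Psi_apply_zero {m : ℕ} (r : ℝ) (q : Em (m + 1)) :
    Psi r q 0 = q 0 * omg r (tl q) := by
  simp [Psi, PiLp.smul_apply, embed_apply_zero, smul_eq_mul]

lemma Psi_apply_succ {m : ℕ} (r : ℝ) (q : Em (m + 1)) (j : Fin m) :
    Psi r q j.succ = q 0 * tl q j := by
  simp [Psi, PiLp.smul_apply, embed_apply_succ, smul_eq_mul, tl_apply]

lemma tl_Psi {m : ℕ} (r : ℝ) (q : Em (m + 1)) :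
    tl (Psi r q) = q 0 • tl q := by
  ext j
  rw [tl_apply, Psi_apply_succ]
  rfl

lemma Psi_injOn {m : ℕ} (r : ℝ) (hr : 0 < r) :
    Set.InjOn (Psi r) {q : Em (m + 1) | 0 < q 0} := by
  intro q hq q' hq' h
  have hq0 : (0:ℝ) < q 0 := hq
  have hq0' : (0:ℝ) < q' 0 := hq'
  have h0 : q 0 * omg r (tl q) = q' 0 * omg r (tl q') := by
    rw [← Psi_apply_zero, ← Psi_apply_zero, h]
  have hs : q 0 • tl q = q' 0 • tl q' := by
    rw [← tl_Psi, ← tl_Psi, h]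
  have hn : (q 0) ^ 2 * ‖tl q‖ ^ 2 = (q' 0) ^ 2 * ‖tl q'‖ ^ 2 := by
    have := congrArg (fun w : Em m => ‖w‖ ^ 2) hs
    simpa [norm_smul, mul_pow, Real.norm_eq_abs, sq_abs] using this
  have hω : (q 0) ^ 2 * (‖tl q‖ ^ 2 + r) = (q' 0) ^ 2 * (‖tl q'‖ ^ 2 + r) := by
    have := congrArg (fun x : ℝ => x ^ 2) h0
    simpa [mul_pow, omg_sq hr] using this
  have hqq : q 0 = q' 0 := by
    have h2 : (q 0) ^ 2 = (q' 0) ^ 2 := by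
      have : (q 0) ^ 2 * r = (q' 0) ^ 2 * r := by linarith
      exact mul_right_cancel₀ hr.ne' this
    nlinarith
  have htl : tl q = tl q' := by
    rw [hqq] at hs
    exact smul_right_injective (Em m) hq0'.ne' hs
  ext i
  induction i using Fin.cases with
  | zero => exact hqq
  | succ j => exact congrArg (fun w : Em m => w j) htl

/-! ### Continuity -/

lemma continuous_omg {m : ℕ} (r : ℝ) : Continuous (omg (m := m) r) :=
  Real.continuous_sqrt.comp ((continuous_norm.pow 2).add continuous_const)

lemma continuous_embed {m : ℕ} (r : ℝ) : Continuous (embed (m := m) r) := by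
  rw [embed_eq]
  exact ((continuous_omg r).smul continuous_const).add (JCLM m).continuous

/-! ### The measure preserving product decomposition -/

def Phi (m : ℕ) : ℝ × Em m → Em (m + 1) := fun z =>
  (MeasurableEquiv.toLp 2 (Fin (m + 1) → ℝ))
    ((MeasurableEquiv.piFinSuccAbove (fun _ : Fin (m + 1) => ℝ) 0).symm
      (z.1, (MeasurableEquiv.toLp 2 (Fin m → ℝ)).symm z.2))

lemma Phi_apply {m : ℕ} (z : ℝ × Em m) (i : Fin (m + 1)) :
    Phi m z i
      = Fin.insertNth (α := fun _ : Fin (m + 1) => ℝ) 0 z.1 (fun j => z.2 j) i := rfl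

lemma Phi_zero {m : ℕ} (z : ℝ × Em m) : Phi m z 0 = z.1 := by
  rw [Phi_apply, Fin.insertNth_apply_same]

lemma Phi_succ {m : ℕ} (z : ℝ × Em m) (j : Fin m) : Phi m z j.succ = z.2 j := by
  have h := Fin.insertNth_apply_succAbove (α := fun _ : Fin (m + 1) => ℝ)
    (i := 0) (j := j) z.1 (fun j => z.2 j)
  rw [Phi_apply, show j.succ = Fin.succAbove 0 j from (congrFun Fin.succAbove_zero j).symm, h]

lemma tl_Phi {m : ℕ} (z : ℝ × Em m) : tl (Phi m z) = z.2 := by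
  ext j
  rw [tl_apply, Phi_succ]

lemma measurePreserving_Phi (m : ℕ) :
    MeasurePreserving (Phi m) (volume : Measure (ℝ × Em m))
      (volume : Measure (Em (m + 1))) := by
  have e1 : MeasurePreserving
      (Prod.map (id : ℝ → ℝ) (MeasurableEquiv.toLp 2 (Fin m → ℝ)).symm)
      volume volume :=
    (MeasurePreserving.id volume).prod (EuclideanSpace.volume_preserving_symm_measurableEquiv_toLp (Fin m))
  have e2 : MeasurePreserving
      ((MeasurableEquiv.piFinSuccAbove (fun _ : Fin (m + 1) => ℝ) 0).symm)
      volume volume :=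
    (volume_preserving_piFinSuccAbove (fun _ : Fin (m + 1) => ℝ) 0).symm
  have e3 : MeasurePreserving
      ((MeasurableEquiv.toLp 2 (Fin (m + 1) → ℝ))) volume volume :=
    (EuclideanSpace.volume_preserving_symm_measurableEquiv_toLp (Fin (m + 1))).symm
  exact (e3.comp (e2.comp e1))

/-! ### The key identity -/

lemma key {m : ℕ} {r : ℝ} (hr : 0 < r) {B : Set (Em m)} (hB : MeasurableSet B) :
    volume (Psi r '' {q : Em (m + 1) | q 0 ∈ Set.Ioc (1:ℝ) 2 ∧ tl q ∈ B})
      = (∫⁻ t in Set.Ioc (1:ℝ) 2, ENNReal.ofReal (2 * r * t ^ m))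
        * ∫⁻ v in B, ENNReal.ofReal ((2 * omg r v)⁻¹) := by
  set F : Em (m + 1) → ℝ≥0∞ := fun q =>
    ENNReal.ofReal (2 * r * (q 0) ^ m) * ENNReal.ofReal ((2 * omg r (tl q))⁻¹) with hF_def
  set f1 : ℝ → ℝ≥0∞ := fun t => ENNReal.ofReal (2 * r * t ^ m) with hf1_def
  set f2 : Em m → ℝ≥0∞ := fun v => ENNReal.ofReal ((2 * omg r v)⁻¹) with hf2_def
  set s : Set (Em (m + 1)) := {q | q 0 ∈ Set.Ioc (1:ℝ) 2 ∧ tl q ∈ B} with hs_def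
  have hsm : MeasurableSet s := by
    have h1 : MeasurableSet ((fun q : Em (m + 1) => q 0) ⁻¹' Set.Ioc (1:ℝ) 2) :=
      ((fstCLM m).continuous.measurable) measurableSet_Ioc
    have h2 : MeasurableSet ((tl : Em (m + 1) → Em m) ⁻¹' B) :=
      ((tlCLM m).continuous.measurable) hB
    exact h1.inter h2
  have hder : ∀ q ∈ s, HasFDerivWithinAt (Psi r) (Lmap r q) s q :=
    fun q _ => (hasFDerivAt_Psi hr q).hasFDerivWithinAt
  have hinj : Set.InjOn (Psi r) s := by
    apply (Psi_injOn r hr).mono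
    intro q hq
    exact lt_trans one_pos hq.1.1
  have hcov := lintegral_image_eq_lintegral_abs_det_fderiv_mul volume hsm hder hinj
    (fun _ => (1 : ℝ≥0∞))
  rw [setLIntegral_one] at hcov
  rw [hcov]
  have hcong : ∀ q ∈ s, ENNReal.ofReal |(Lmap r q).det| * (1 : ℝ≥0∞) = F q := by
    intro q hq
    have h1 : (0:ℝ) < q 0 := lt_trans one_pos hq.1.1
    have h2 : 0 < omg r (tl q) := omg_pos hr _
    rw [mul_one, det_Lmap hr q, hF_def]
    show _ = ENNReal.ofReal (2 * r * q 0 ^ m) * ENNReal.ofReal (2 * omg r (tl q))⁻¹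
    rw [← ENNReal.ofReal_mul (by positivity)]
    congr 1
    rw [abs_of_pos (by positivity)]
    field_simp
  rw [setLIntegral_congr_fun hsm hcong]
  have hc1 : Continuous fun q : Em (m + 1) => 2 * r * (q 0) ^ m :=
    continuous_const.mul ((fstCLM m).continuous.pow m)
  have hc2 : Continuous fun q : Em (m + 1) => 2 * omg r (tl q) :=
    continuous_const.mul ((continuous_omg r).comp (tlCLM m).continuous)
  have hFm : Measurable F :=
    (ENNReal.measurable_ofReal.comp hc1.measurable).mul
      (ENNReal.measurable_ofReal.comp hc2.measurable.inv)
  rw [← lintegral_indicator hsm F, ← (measurePreserving_Phi m).lintegral_comp (hFm.indicator hsm)]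
  have hprod : ∀ z : ℝ × Em m,
      Set.indicator s F (Phi m z)
        = Set.indicator (Set.Ioc (1:ℝ) 2) f1 z.1 * Set.indicator B f2 z.2 := by
    intro z
    have hmem : Phi m z ∈ s ↔ z.1 ∈ Set.Ioc (1:ℝ) 2 ∧ z.2 ∈ B := by
      rw [hs_def]
      simp only [Set.mem_setOf_eq, Phi_zero, tl_Phi]
    by_cases h1 : z.1 ∈ Set.Ioc (1:ℝ) 2
    · by_cases h2 : z.2 ∈ B
      · rw [Set.indicator_of_mem (hmem.2 ⟨h1, h2⟩), Set.indicator_of_mem h1,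
          Set.indicator_of_mem h2]
        simp only [hF_def, hf1_def, hf2_def, Phi_zero, tl_Phi]
      · rw [Set.indicator_of_notMem (fun hc => h2 (hmem.1 hc).2),
          Set.indicator_of_notMem h2, mul_zero]
    · rw [Set.indicator_of_notMem (fun hc => h1 (hmem.1 hc).1),
        Set.indicator_of_notMem h1, zero_mul]
  rw [lintegral_congr hprod]
  have hm1 : Measurable (Set.indicator (Set.Ioc (1:ℝ) 2) f1) :=
    (ENNReal.measurable_ofReal.comp
      (continuous_const.mul (continuous_pow m)).measurable).indicator measurableSet_Ioc
  have hm2 : Measurable (Set.indicator B f2) :=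
    (ENNReal.measurable_ofReal.comp
      (continuous_const.mul (continuous_omg r)).measurable.inv).indicator hB
  rw [MeasureTheory.Measure.volume_eq_prod, lintegral_prod_mul hm1.aemeasurable hm2.aemeasurable,
    lintegral_indicator measurableSet_Ioc f1, lintegral_indicator hB f2]

lemma kappa_pos {m : ℕ} {r : ℝ} (hr : 0 < r) :
    (∫⁻ t in Set.Ioc (1:ℝ) 2, ENNReal.ofReal (2 * r * t ^ m)) ≠ 0 := by
  have hle : ENNReal.ofReal (2 * r) * volume (Set.Ioc (1:ℝ) 2)
      ≤ ∫⁻ t in Set.Ioc (1:ℝ) 2, ENNReal.ofReal (2 * r * t ^ m) := by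
    rw [← setLIntegral_const]
    apply setLIntegral_mono
    · exact ENNReal.measurable_ofReal.comp
        (continuous_const.mul (continuous_id.pow m)).measurable
    · intro t ht
      apply ENNReal.ofReal_le_ofReal
      have h1 : (1:ℝ) ≤ t := le_of_lt ht.1
      have h2 : (1:ℝ) ≤ t ^ m := one_le_pow₀ h1
      nlinarith
  intro h0
  rw [h0, nonpos_iff_eq_zero] at hle
  have h1 : ENNReal.ofReal (2 * r) ≠ 0 := by
    simp only [ne_eq, ENNReal.ofReal_eq_zero, not_le]
    linarith
  have h2 : volume (Set.Ioc (1:ℝ) 2) ≠ 0 := by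
    rw [Real.volume_Ioc]
    simp only [ne_eq, ENNReal.ofReal_eq_zero, not_le]
    norm_num
  exact (mul_ne_zero h1 h2) hle

lemma kappa_lt_top {m : ℕ} {r : ℝ} (hr : 0 < r) :
    (∫⁻ t in Set.Ioc (1:ℝ) 2, ENNReal.ofReal (2 * r * t ^ m)) ≠ ⊤ := by
  have hle : (∫⁻ t in Set.Ioc (1:ℝ) 2, ENNReal.ofReal (2 * r * t ^ m))
      ≤ ENNReal.ofReal (2 * r * 2 ^ m) * volume (Set.Ioc (1:ℝ) 2) := by
    rw [← setLIntegral_const]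
    apply setLIntegral_mono measurable_const
    intro t ht
    apply ENNReal.ofReal_le_ofReal
    have h0 : (0:ℝ) ≤ t := by linarith [ht.1]
    have h2 : t ^ m ≤ 2 ^ m := pow_le_pow_left₀ h0 ht.2 m
    nlinarith
  apply ne_top_of_le_ne_top _ hle
  rw [Real.volume_Ioc]
  exact (ENNReal.mul_lt_top ENNReal.ofReal_lt_top ENNReal.ofReal_lt_top).ne

/-! ### Invariance of the mass shell measure -/

lemma shell_image {m : ℕ} {r : ℝ} (hr : 0 < r)
    (Λ : Em (m + 1) ≃ₗ[ℝ] Em (m + 1))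
    (hη : ∀ p q, eta (Λ p) (Λ q) = eta p q)
    (horth : ∀ p, eta p p < 0 → 0 < p 0 → 0 < (Λ p) 0) (v : Em m) :
    Λ (embed r v) = embed r (tl (Λ (embed r v))) := by
  have h1 : eta (Λ (embed r v)) (Λ (embed r v)) = -r := by
    rw [hη]; exact eta_embed hr v
  have h2 : 0 < (Λ (embed r v)) 0 :=
    horth _ (by rw [eta_embed hr v]; linarith)
      (by rw [embed_apply_zero]; exact omg_pos hr v)
  exact (embed_of_shell hr _ h1 h2).symm

lemma tl_cons {m : ℕ} (a : ℝ) (v : Em m) :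
    tl (WithLp.toLp 2 (Fin.cons a v.ofLp) : Em (m + 1)) = v := by
  ext j
  rw [tl_apply]
  simp

lemma cons_zero' {m : ℕ} (a : ℝ) (v : Em m) :
    (WithLp.toLp 2 (Fin.cons a v.ofLp) : Em (m + 1)) 0 = a := rfl

lemma image_PsiSet {m : ℕ} {r : ℝ} (hr : 0 < r)
    (Λ : Em (m + 1) ≃ₗ[ℝ] Em (m + 1))
    (hη : ∀ p q, eta (Λ p) (Λ q) = eta p q)
    (horth : ∀ p, eta p p < 0 → 0 < p 0 → 0 < (Λ p) 0)
    {A : Set (Em (m + 1))} :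
    ⇑Λ '' (Psi r '' {q : Em (m + 1) | q 0 ∈ Set.Ioc (1:ℝ) 2 ∧ tl q ∈ embed r ⁻¹' (⇑Λ ⁻¹' A)})
      = Psi r '' {q : Em (m + 1) | q 0 ∈ Set.Ioc (1:ℝ) 2 ∧ tl q ∈ embed r ⁻¹' A} := by
  have hη' : ∀ p q, eta (Λ.symm p) (Λ.symm q) = eta p q := by
    intro p q
    conv_rhs => rw [← Λ.apply_symm_apply p, ← Λ.apply_symm_apply q]
    rw [hη]
  have horth' := symm_orth Λ hη horth
  ext x
  simp only [Set.mem_image, Set.mem_setOf_eq, Set.mem_preimage]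
  constructor
  · rintro ⟨y, ⟨q, ⟨hq1, hq2⟩, rfl⟩, rfl⟩
    refine ⟨WithLp.toLp 2 (Fin.cons (q 0) (tl (Λ (embed r (tl q)))).ofLp), ⟨by rwa [cons_zero'], ?_⟩, ?_⟩
    · rw [tl_cons, ← shell_image hr Λ hη horth (tl q)]
      exact hq2
    · rw [Psi, Psi, cons_zero', tl_cons, ← shell_image hr Λ hη horth (tl q),
        LinearEquiv.map_smul]
  · rintro ⟨q, ⟨hq1, hq2⟩, rfl⟩
    refine ⟨Psi r (WithLp.toLp 2 (Fin.cons (q 0) (tl (Λ.symm (embed r (tl q)))).ofLp)),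
      ⟨WithLp.toLp 2 (Fin.cons (q 0) (tl (Λ.symm (embed r (tl q)))).ofLp), ⟨by rwa [cons_zero'], ?_⟩, rfl⟩, ?_⟩
    · rw [tl_cons, ← shell_image hr Λ.symm hη' horth' (tl q), Λ.apply_symm_apply]
      exact hq2
    · rw [Psi, Psi, cons_zero', tl_cons, ← shell_image hr Λ.symm hη' horth' (tl q),
        LinearEquiv.map_smul, Λ.apply_symm_apply]

lemma massShell_apply {m : ℕ} {r : ℝ} {S : Set (Em (m + 1))} (hS : MeasurableSet S) :
    massShellMeasure m r S
      = ∫⁻ v in embed r ⁻¹' S, ENNReal.ofReal ((2 * omg r v)⁻¹) := by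
  rw [massShellMeasure, Measure.map_apply (continuous_embed r).measurable hS,
    withDensity_apply _ ((continuous_embed r).measurable hS)]

lemma massShell_inv {m : ℕ} {r : ℝ} (hr : 0 < r)
    (Λ : Em (m + 1) ≃ₗ[ℝ] Em (m + 1))
    (hη : ∀ p q, eta (Λ p) (Λ q) = eta p q)
    (horth : ∀ p, eta p p < 0 → 0 < p 0 → 0 < (Λ p) 0)
    {A : Set (Em (m + 1))} (hA : MeasurableSet A) :
    massShellMeasure m r (⇑Λ ⁻¹' A) = massShellMeasure m r A := by
  have hcont : Continuous (⇑Λ : Em (m + 1) → Em (m + 1)) :=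
    Λ.toLinearMap.continuous_of_finiteDimensional
  have hAm : MeasurableSet (⇑Λ ⁻¹' A) := hcont.measurable hA
  have hem : Measurable (embed (m := m) r) := (continuous_embed r).measurable
  have k1 := key hr (hem hAm)
  have k0 := key hr (hem hA)
  rw [← massShell_apply hAm] at k1
  rw [← massShell_apply hA] at k0
  have himg := image_PsiSet hr Λ hη horth (A := A)
  have hdetimg := Measure.addHaar_image_linearMap (volume : Measure (Em (m + 1)))
    Λ.toLinearMap (Psi r '' {q : Em (m + 1) | q 0 ∈ Set.Ioc (1:ℝ) 2 ∧ tl q ∈ embed r ⁻¹' (⇑Λ ⁻¹' A)})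
  rw [abs_det_eq_one Λ hη] at hdetimg
  simp only [ENNReal.ofReal_one, one_mul] at hdetimg
  have hcoe : (⇑Λ.toLinearMap : Em (m + 1) → Em (m + 1)) = ⇑Λ := rfl
  rw [hcoe, himg] at hdetimg
  -- hdetimg : volume (Psi '' s0) = volume (Psi '' s1)
  rw [k0, k1] at hdetimg
  exact (ENNReal.mul_right_inj (kappa_pos hr) (kappa_lt_top hr)).mp hdetimg.symm

end MassShellAux

/-- The map `ψ ↦ (p ↦ e^{−i η(p,a)} ψ(Λ⁻¹ p))` preserves the `L²(μ_r^+)` inner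
product for any orthochronous Lorentz transformation `Λ` and any `a ∈ ℝ^d`. -/
theorem statement5 (m : ℕ) (hm : 1 ≤ m) (r : ℝ) (hr : 0 < r)
    (a : EuclideanSpace ℝ (Fin (m + 1)))
    (Λ : EuclideanSpace ℝ (Fin (m + 1)) ≃ₗ[ℝ] EuclideanSpace ℝ (Fin (m + 1)))
    (hη : ∀ p q, eta (Λ p) (Λ q) = eta p q)
    (horth : ∀ p, eta p p < 0 → 0 < p 0 → 0 < (Λ p) 0)
    (φ ψ : EuclideanSpace ℝ (Fin (m + 1)) → ℂ)
    (hφ : Measurable φ) (hψ : Measurable ψ) :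
    ∫ p, (starRingEnd ℂ) (Complex.exp (-(Complex.I * (eta p a : ℂ))) * φ (Λ.symm p))
          * (Complex.exp (-(Complex.I * (eta p a : ℂ))) * ψ (Λ.symm p))
        ∂(massShellMeasure m r)
      = ∫ p, (starRingEnd ℂ) (φ p) * ψ p ∂(massShellMeasure m r) := by
  classical
  have hη' : ∀ p q, eta (Λ.symm p) (Λ.symm q) = eta p q := by
    intro p q
    conv_rhs => rw [← Λ.apply_symm_apply p, ← Λ.apply_symm_apply q]
    rw [hη]
  have horth' := MassShellAux.symm_orth Λ hη horth
  have hcont : Continuous (⇑Λ.symm : EuclideanSpace ℝ (Fin (m + 1)) → EuclideanSpace ℝ (Fin (m + 1))) :=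
    Λ.symm.toLinearMap.continuous_of_finiteDimensional
  have hmap : Measure.map (⇑Λ.symm) (massShellMeasure m r) = massShellMeasure m r := by
    apply Measure.ext
    intro A hA
    rw [Measure.map_apply hcont.measurable hA]
    exact MassShellAux.massShell_inv hr Λ.symm hη' horth' hA
  set g : EuclideanSpace ℝ (Fin (m + 1)) → ℂ := fun p => (starRingEnd ℂ) (φ p) * ψ p with hg
  have hgm : Measurable g :=
    (Complex.continuous_conj.measurable.comp hφ).mul hψ
  have hpt : ∀ p, (starRingEnd ℂ) (Complex.exp (-(Complex.I * (eta p a : ℂ))) * φ (Λ.symm p))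
      * (Complex.exp (-(Complex.I * (eta p a : ℂ))) * ψ (Λ.symm p)) = g (Λ.symm p) := by
    intro p
    have hc : (starRingEnd ℂ) (Complex.exp (-(Complex.I * (eta p a : ℂ))))
        * Complex.exp (-(Complex.I * (eta p a : ℂ))) = 1 := by
      rw [← Complex.exp_conj, ← Complex.exp_add]
      have : (starRingEnd ℂ) (-(Complex.I * (eta p a : ℂ))) = Complex.I * (eta p a : ℂ) := by
        rw [map_neg, map_mul, Complex.conj_I, Complex.conj_ofReal]
        ring
      rw [this]
      norm_num
    calc (starRingEnd ℂ) (Complex.exp (-(Complex.I * (eta p a : ℂ))) * φ (Λ.symm p))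
          * (Complex.exp (-(Complex.I * (eta p a : ℂ))) * ψ (Λ.symm p))
        = ((starRingEnd ℂ) (Complex.exp (-(Complex.I * (eta p a : ℂ))))
            * Complex.exp (-(Complex.I * (eta p a : ℂ))))
          * ((starRingEnd ℂ) (φ (Λ.symm p)) * ψ (Λ.symm p)) := by
          rw [map_mul]; ring
      _ = g (Λ.symm p) := by rw [hc, one_mul]
  rw [integral_congr_ae (Filter.Eventually.of_forall hpt)]
  conv_rhs => rw [← hmap]
  rw [integral_map hcont.measurable.aemeasurable hgm.aestronglyMeasurable]
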